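/- Let Σ₀ be symmetric positive definite, B₀ = A Σ₀^{1/2}, α > 0, γ > 0, C₀ = (γ²/α) Σ₀, and F = (C₀^{-1} + n γ^{-2} A^* A)^{-1} A^* / γ². Then F = Σ₀^{1/2} (α I + n B₀^* B₀)^{-1} B₀^* and tr(F F^*) ≤ (1/(α n)) tr(Σ₀). -/

import Mathlib

open Matrix

set_option linter.unusedSectionVars false

section aux
variable {k : Type*} [Fintype k] [DecidableEq k]

lemma aux_smul_posSemidef {c : ℝ} (hc : 0 ≤ c) {M : Matrix k k ℝ}
    (hM : M.PosSemidef) : (c • M).PosSemidef := by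
  exact hM.smul hc

lemma aux_smul_posDef {c : ℝ} (hc : 0 < c) {M : Matrix k k ℝ}
    (hM : M.PosDef) : (c • M).PosDef := by
  exact hM.smul hc

lemma aux_trace_nonneg {M : Matrix k k ℝ} (hM : M.PosSemidef) : 0 ≤ M.trace := by
  exact hM.trace_nonneg

end aux

/-- The square root of a positive semidefinite matrix, as defined in the older Mathlib
(`Matrix.PosSemidef.sqrt`, since removed). -/
noncomputable def Matrix.PosSemidef.sqrt {n 𝕜 : Type*} [Fintype n] [RCLike 𝕜] [PartialOrder 𝕜] [StarOrderedRing 𝕜]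
    [DecidableEq n]
    {A : Matrix n n 𝕜} (hA : A.PosSemidef) : Matrix n n 𝕜 :=
  hA.1.eigenvectorUnitary.1 * diagonal ((↑) ∘ (√·) ∘ hA.1.eigenvalues) *
    (star hA.1.eigenvectorUnitary : Matrix n n 𝕜)

/-- With `Σ₀` symmetric positive definite, `B₀ = A Σ₀^{1/2}`, `C₀ = (γ²/α) Σ₀`
and `F = (C₀⁻¹ + n γ⁻² Aᵀ A)⁻¹ Aᵀ / γ²`, one has
`F = Σ₀^{1/2} (α I + n B₀ᵀ B₀)⁻¹ B₀ᵀ` and `tr(F Fᵀ) ≤ tr(Σ₀)/(α n)`. -/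
theorem kalman_variance_operator_formula {d m : ℕ}
    (A : Matrix (Fin m) (Fin d) ℝ) (S0 : Matrix (Fin d) (Fin d) ℝ)
    (hS : S0.PosDef) (α γ : ℝ) (hα : 0 < α) (hγ : 0 < γ) (n : ℕ) (hn : 1 ≤ n)
    (B₀ : Matrix (Fin m) (Fin d) ℝ) (hB : B₀ = A * hS.posSemidef.sqrt)
    (C₀ : Matrix (Fin d) (Fin d) ℝ) (hC₀ : C₀ = (γ ^ 2 / α) • S0)
    (F : Matrix (Fin d) (Fin m) ℝ)
    (hF : F = (γ ^ 2)⁻¹ • ((C₀⁻¹ + ((n : ℝ) / γ ^ 2) • (Aᵀ * A))⁻¹ * Aᵀ)) :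
    F = hS.posSemidef.sqrt *
        (α • (1 : Matrix (Fin d) (Fin d) ℝ) + (n : ℝ) • (B₀ᵀ * B₀))⁻¹ * B₀ᵀ ∧
    (F * Fᵀ).trace ≤ S0.trace / (α * n) := by
  set R := hS.posSemidef.sqrt with hRdef
  have hRpsd : R.PosSemidef := by
    rw [hRdef, Matrix.PosSemidef.sqrt]
    exact (PosSemidef.diagonal fun i => by simp [Real.sqrt_nonneg]).mul_mul_conjTranspose_same _
  have hRR : R * R = S0 := by
    have hspec := hS.posSemidef.1.spectral_theorem
    rw [Unitary.conjStarAlgAut_apply] at hspec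
    refine Eq.trans ?_ hspec.symm
    have hsu : (star hS.posSemidef.1.eigenvectorUnitary : Matrix (Fin d) (Fin d) ℝ) *
        hS.posSemidef.1.eigenvectorUnitary.1 = 1 := Unitary.coe_star_mul_self _
    rw [hRdef, Matrix.PosSemidef.sqrt]
    rw [show ∀ a b c e f g : Matrix (Fin d) (Fin d) ℝ, a*b*c*(e*f*g) = a*(b*(c*e)*f)*g from by
      intros; simp only [Matrix.mul_assoc]]
    rw [hsu, Matrix.mul_one, diagonal_mul_diagonal]
    congr 2
    congr 1
    funext i
    simp [Real.mul_self_sqrt (hS.posSemidef.eigenvalues_nonneg i)]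
  have hRsymm : Rᵀ = R := by
    have h := hRpsd.1
    rwa [Matrix.IsHermitian, conjTranspose_eq_transpose_of_trivial] at h
  have hdetS : (0:ℝ) < S0.det := hS.det_pos
  have hdetR : R.det ≠ 0 := by
    intro h
    rw [← hRR, det_mul, h, mul_zero] at hdetS
    exact lt_irrefl _ hdetS
  haveI : Invertible R :=
    ((Matrix.isUnit_iff_isUnit_det R).mpr (isUnit_iff_ne_zero.mpr hdetR)).invertible
  haveI : Invertible S0 := hS.isUnit.invertible
  set P : Matrix (Fin d) (Fin d) ℝ := B₀ᵀ * B₀ with hPdef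
  have hPpsd : P.PosSemidef := by
    have h := posSemidef_conjTranspose_mul_self B₀
    rwa [conjTranspose_eq_transpose_of_trivial] at h
  have hPsymm : Pᵀ = P := by rw [hPdef, transpose_mul, transpose_transpose]
  set M : Matrix (Fin d) (Fin d) ℝ := α • (1 : Matrix (Fin d) (Fin d) ℝ) + (n:ℝ) • P
    with hMdef
  have hnpos : (0:ℝ) < (n:ℝ) := by exact_mod_cast hn
  have hMpd : M.PosDef :=
    (aux_smul_posDef hα Matrix.PosDef.one).add_posSemidef
      (aux_smul_posSemidef hnpos.le hPpsd)
  haveI : Invertible M := hMpd.isUnit.invertible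
  have hMsymm : Mᵀ = M := by
    rw [hMdef, transpose_add, transpose_smul, transpose_smul, transpose_one, hPsymm]
  have hMinvsymm : (M⁻¹)ᵀ = M⁻¹ := by rw [transpose_nonsing_inv, hMsymm]
  have hB₀t : B₀ᵀ = R * Aᵀ := by rw [hB, transpose_mul, hRsymm]
  have hγ2 : (γ:ℝ)^2 ≠ 0 := pow_ne_zero 2 hγ.ne'
  have hC₀inv : C₀⁻¹ = (α / γ^2) • S0⁻¹ := by
    apply Matrix.inv_eq_right_inv
    rw [hC₀, Matrix.smul_mul, Matrix.mul_smul, smul_smul, Matrix.mul_inv_of_invertible]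
    rw [show γ^2/α * (α/γ^2) = 1 by field_simp, one_smul]
  have hS0inv : S0⁻¹ = R⁻¹ * R⁻¹ := by rw [← hRR, Matrix.mul_inv_rev]
  have hKey : C₀⁻¹ + ((n:ℝ)/γ^2) • (Aᵀ * A) = (γ^2)⁻¹ • (R⁻¹ * M * R⁻¹) := by
    rw [hC₀inv, hS0inv, hMdef, hPdef, hB₀t, hB]
    simp only [Matrix.mul_add, Matrix.add_mul, Matrix.mul_smul, Matrix.smul_mul,
      Matrix.mul_one, Matrix.one_mul, smul_smul, smul_add, Matrix.mul_assoc,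
      Matrix.inv_mul_cancel_left_of_invertible, Matrix.mul_inv_cancel_left_of_invertible,
      Matrix.mul_inv_of_invertible, Matrix.inv_mul_of_invertible]
    congr 1
    · rw [show (γ^2)⁻¹ * α = α / γ^2 by ring]
    · rw [show (γ^2)⁻¹ * (n:ℝ) = (n:ℝ) / γ^2 by ring]
  have hKeyinv : (C₀⁻¹ + ((n:ℝ)/γ^2) • (Aᵀ * A))⁻¹ = (γ^2) • (R * M⁻¹ * R) := by
    rw [hKey]
    apply Matrix.inv_eq_right_inv
    rw [Matrix.smul_mul, Matrix.mul_smul, smul_smul, inv_mul_cancel₀ hγ2, one_smul]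
    simp only [Matrix.mul_assoc, Matrix.inv_mul_cancel_left_of_invertible,
      Matrix.mul_inv_cancel_left_of_invertible, Matrix.mul_inv_of_invertible,
      Matrix.inv_mul_of_invertible]
  have part1 : F = R * M⁻¹ * B₀ᵀ := by
    rw [hF, hKeyinv, Matrix.smul_mul, smul_smul, inv_mul_cancel₀ hγ2, one_smul,
      hB₀t, Matrix.mul_assoc, Matrix.mul_assoc]
  refine ⟨part1, ?_⟩
  have hFt : Fᵀ = B₀ * (M⁻¹ * R) := by
    rw [part1, transpose_mul, transpose_mul, hRsymm, hMinvsymm, transpose_transpose]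
  have hFF : F * Fᵀ = R * (M⁻¹ * P * M⁻¹) * R := by
    rw [hFt, part1, hPdef]
    simp only [Matrix.mul_assoc]
  set Y : Matrix (Fin d) (Fin d) ℝ :=
    (α/(n:ℝ)) • (1 : Matrix (Fin d) (Fin d) ℝ) + P + ((n:ℝ)/α) • (P*P) with hYdef
  have hPPpsd : (P*P).PosSemidef := by
    have h := posSemidef_conjTranspose_mul_self P
    rwa [conjTranspose_eq_transpose_of_trivial, hPsymm] at h
  have hYpsd : Y.PosSemidef :=
    ((aux_smul_posSemidef (div_nonneg hα.le hnpos.le) Matrix.PosSemidef.one).add hPpsd).add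
      (aux_smul_posSemidef (div_nonneg hnpos.le hα.le) hPPpsd)
  have hY2 : Y = (α*(n:ℝ))⁻¹ • (M*M) - P := by
    rw [hYdef, hMdef]
    simp only [Matrix.mul_add, Matrix.add_mul, Matrix.mul_smul, Matrix.smul_mul,
      Matrix.mul_one, Matrix.one_mul, smul_smul, smul_add]
    match_scalars <;> field_simp <;> ring
  have key : (α*(n:ℝ))⁻¹ • S0 - F * Fᵀ = R * (M⁻¹ * Y * M⁻¹) * R := by
    rw [hFF, ← hRR, hY2]
    simp only [Matrix.mul_sub, Matrix.sub_mul, Matrix.mul_smul, Matrix.smul_mul,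
      Matrix.mul_assoc, Matrix.inv_mul_cancel_left_of_invertible,
      Matrix.mul_inv_cancel_left_of_invertible, Matrix.mul_inv_of_invertible,
      Matrix.inv_mul_of_invertible, Matrix.mul_one, Matrix.one_mul]
  have hXpsd : (R * (M⁻¹ * Y * M⁻¹) * R).PosSemidef := by
    have h1 : (M⁻¹ * Y * M⁻¹).PosSemidef := by
      have h := hYpsd.conjTranspose_mul_mul_same M⁻¹
      rwa [conjTranspose_eq_transpose_of_trivial, hMinvsymm] at h
    have h := h1.conjTranspose_mul_mul_same R
    rwa [conjTranspose_eq_transpose_of_trivial, hRsymm] at h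
  have htr : (α*(n:ℝ))⁻¹ * S0.trace - (F*Fᵀ).trace = (R * (M⁻¹ * Y * M⁻¹) * R).trace := by
    rw [← key, trace_sub, trace_smul, smul_eq_mul]
  have h0 := aux_trace_nonneg hXpsd
  have : (F*Fᵀ).trace ≤ (α*(n:ℝ))⁻¹ * S0.trace := by linarith [htr ▸ h0]
  calc (F*Fᵀ).trace ≤ (α*(n:ℝ))⁻¹ * S0.trace := this
    _ = S0.trace / (α * (n:ℝ)) := by ring
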